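/- Let K be an algebraically closed field and F = K(x). Let S be a K-subspace of F with dim_K S = n, K(S) = F, and combinatorial genus γ with 2 ≤ γ ≤ n − 3. Let (e_1, …, e_n) be a filtered basis of S with respect to v_∞ with e_1 = 1, with combinatorial genii γ_i of the natural filtration. Suppose {γ_i : 1 ≤ i ≤ n} = {0, γ}, and that the least index t with γ_t = γ satisfies t ≥ γ + 3. Then deg(e_i) = i − 1 for all 1 ≤ i ≤ t − 1, and Δ := deg(e_t) − (t − 2) satisfies 1 ≤ Δ ≤ γ + 1. -/

import Mathlib

open Polynomial Pointwise

noncomputable section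

set_option linter.unusedSectionVars false
set_option linter.unusedVariables false

namespace FFF

variable {K : Type*} [Field K] [IsAlgClosed K]

/-- Valuation of a rational function at the finite place `x - α`
(order of vanishing at `x - α`). -/
def vA (α : K) (f : RatFunc K) : ℤ :=
  (Polynomial.rootMultiplicity α f.num : ℤ) - (Polynomial.rootMultiplicity α f.denom : ℤ)

/-- Valuation of a rational function at the place at infinity:
`deg (denominator) - deg (numerator)`. -/
def vInf (f : RatFunc K) : ℤ := -f.intDegree

/-- The places of `K(x)`: `some α` is the finite place at `α ∈ K`, `none` is the
place at infinity; `plval p` is the associated valuation. -/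
def plval (p : Option K) (f : RatFunc K) : ℤ :=
  Option.elim p (vInf f) (fun α => vA α f)

/-- The degree of a rational function, `deg f = -v∞(f)`. -/
def fdeg (f : RatFunc K) : ℤ := f.intDegree

/-- A divisor on `K(x)`: an integer for every place, zero for all but finitely many. -/
abbrev Divisor (K : Type*) [Field K] := Option K →₀ ℤ

/-- The degree of a divisor: the sum of its values. -/
def divDeg (D : Divisor K) : ℤ := D.sum fun _ n => n

/-- The Riemann–Roch space `L(D)` of a divisor `D`. -/
def RRset (D : Divisor K) : Set (RatFunc K) :=
  {f | f = 0 ∨ ∀ p : Option K, -(D p) ≤ plval p f}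

/-- The subfield `K(T)` of `K(x)` generated by the constants `K` and a set `T`. -/
def Kgen (T : Set (RatFunc K)) : Subfield (RatFunc K) :=
  Subfield.closure ((Set.range fun a : K => (RatFunc.C a : RatFunc K)) ∪ T)

/-- The combinatorial genus `γ = dim S² - 2 dim S + 1` of a subspace `S`. -/
def cgenus (S : Submodule K (RatFunc K)) : ℤ :=
  (Module.finrank K ↥(S * S) : ℤ) - 2 * (Module.finrank K ↥S : ℤ) + 1

/-- `sfil e i` is the `i`-th step (1-indexed) of the natural filtration attached to a
filtered basis `e`: the span of the first `i` basis vectors. -/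
def sfil {n : ℕ} (e : Fin n → RatFunc K) (i : ℕ) : Submodule K (RatFunc K) :=
  Submodule.span K (e '' {j | (j : ℕ) < i})

/-- `e` is a filtered basis of `S` with respect to the valuation `v`:
a basis of `S` with strictly decreasing valuations. -/
def IsFilteredBasis {n : ℕ} (v : RatFunc K → ℤ) (S : Submodule K (RatFunc K))
    (e : Fin n → RatFunc K) : Prop :=
  LinearIndependent K e ∧ Submodule.span K (Set.range e) = S ∧
    StrictAnti fun i => v (e i)

/-- `D` is the divisor of least degree with `S ⊆ L(D)`, i.e.
`D(P) = -min {v_P s : s ∈ S, s ≠ 0}` for every place `P`. -/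
def IsMinDivisor (S : Submodule K (RatFunc K)) (D : Divisor K) : Prop :=
  ∀ p : Option K, IsLeast {d : ℤ | ∃ s ∈ S, s ≠ 0 ∧ plval p s = d} (-(D p))


lemma fdeg_mul {f g : RatFunc K} (hf : f ≠ 0) (hg : g ≠ 0) :
    fdeg (f * g) = fdeg f + fdeg g := RatFunc.intDegree_mul hf hg

lemma fdeg_one : fdeg (1 : RatFunc K) = 0 := RatFunc.intDegree_one

lemma ratC_ne_zero {c : K} (hc : c ≠ 0) : (RatFunc.C c : RatFunc K) ≠ 0 := by
  intro h
  exact hc ((_root_.map_eq_zero (RatFunc.C (K := K))).mp h)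

lemma fdeg_smul {c : K} (hc : c ≠ 0) (f : RatFunc K) : fdeg (c • f) = fdeg f := by
  by_cases hf : f = 0
  · simp [hf]
  · rw [RatFunc.smul_eq_C_mul, fdeg_mul (ratC_ne_zero hc) hf,
      show fdeg (RatFunc.C c) = 0 from RatFunc.intDegree_C c, zero_add]

lemma fdeg_add_le {f g : RatFunc K} (hg : g ≠ 0) (hfg : f + g ≠ 0) :
    fdeg (f + g) ≤ max (fdeg f) (fdeg g) := RatFunc.intDegree_add_le hg hfg

lemma fdeg_neg (f : RatFunc K) : fdeg (-f) = fdeg f := RatFunc.intDegree_neg f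

/-- Sum of terms each zero or of `fdeg < c` is zero or of `fdeg < c`. -/
lemma fdeg_sum_lt {ι : Type*} (s : Finset ι) (F : ι → RatFunc K) (c : ℤ)
    (h : ∀ i ∈ s, F i = 0 ∨ fdeg (F i) < c) :
    (∑ i ∈ s, F i) = 0 ∨ fdeg (∑ i ∈ s, F i) < c := by
  classical
  induction s using Finset.induction_on with
  | empty => simp
  | @insert a s' ha ih =>
    rw [Finset.sum_insert ha]
    have hFa := h a (Finset.mem_insert_self a s')
    have htail := ih fun i hi => h i (Finset.mem_insert_of_mem hi)
    rcases hFa with h1 | h1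
    · simpa [h1] using htail
    by_cases h2 : (∑ i ∈ s', F i) = 0
    · rw [h2, add_zero]; right; exact h1
    have h3 : fdeg (∑ i ∈ s', F i) < c := htail.resolve_left h2
    by_cases hz : F a + ∑ i ∈ s', F i = 0
    · left; exact hz
    · right
      exact lt_of_le_of_lt (fdeg_add_le h2 hz) (max_lt h1 h3)

/-- A sum with a strictly dominant term is nonzero. -/
lemma sum_ne_zero_of_dominant {ι : Type*} (s : Finset ι) (F : ι → RatFunc K) (i₀ : ι)
    (hi₀ : i₀ ∈ s) (h0 : F i₀ ≠ 0)
    (hlt : ∀ i ∈ s, i ≠ i₀ → F i = 0 ∨ fdeg (F i) < fdeg (F i₀)) :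
    (∑ i ∈ s, F i) ≠ 0 := by
  classical
  rw [← Finset.add_sum_erase s F hi₀]
  have htail := fdeg_sum_lt (s.erase i₀) F (fdeg (F i₀)) fun i hi =>
    hlt i (Finset.mem_of_mem_erase hi) (Finset.ne_of_mem_erase hi)
  intro hz
  have : ∑ i ∈ s.erase i₀, F i = -F i₀ := by linear_combination (norm := module) hz
  rcases htail with h | h
  · rw [h] at this; exact h0 (by simpa using this.symm)
  · rw [this, fdeg_neg] at h; exact lt_irrefl _ h


lemma fdeg_add_cases {f g : RatFunc K} {c : ℤ} (hf : f = 0 ∨ fdeg f ≤ c)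
    (hg : g = 0 ∨ fdeg g ≤ c) : f + g = 0 ∨ fdeg (f + g) ≤ c := by
  by_cases hf0 : f = 0
  · simpa [hf0] using hg
  by_cases hg0 : g = 0
  · simpa [hg0] using hf
  by_cases hz : f + g = 0
  · left; exact hz
  · right
    exact le_trans (fdeg_add_le hg0 hz) (max_le (hf.resolve_left hf0) (hg.resolve_left hg0))

/-- If each integer in `Z` is the degree of a nonzero element of `V`, then `|Z| ≤ dim V`. -/
lemma card_le_finrank (V : Submodule K (RatFunc K)) [FiniteDimensional K V]
    (Z : Finset ℤ) (hZ : ∀ z ∈ Z, ∃ f, f ∈ V ∧ f ≠ 0 ∧ fdeg f = z) :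
    Z.card ≤ Module.finrank K V := by
  classical
  have hg : ∀ z : {z // z ∈ Z}, ∃ f, f ∈ V ∧ f ≠ 0 ∧ fdeg f = (z : ℤ) :=
    fun z => hZ z z.2
  choose g hgV hg0 hgd using hg
  have hli : LinearIndependent K (fun zz : {z // z ∈ Z} => (⟨g zz, hgV zz⟩ : V)) := by
    rw [Fintype.linearIndependent_iff]
    intro c hc
    by_contra hne
    push_neg at hne
    obtain ⟨z₁, hz₁⟩ := hne
    have hc' : (∑ z : {z // z ∈ Z}, c z • g z) = 0 := by
      have := congrArg (Subtype.val) hc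
      simpa using this
    set T : Finset {z // z ∈ Z} := Finset.univ.filter (fun z => c z ≠ 0) with hT
    have hTne : T.Nonempty := ⟨z₁, by simp [hT, hz₁]⟩
    obtain ⟨z₀, hz₀T, hz₀max⟩ := Finset.exists_max_image T (fun z => (z : ℤ)) hTne
    have hc₀ : c z₀ ≠ 0 := (Finset.mem_filter.mp hz₀T).2
    refine sum_ne_zero_of_dominant Finset.univ (fun z => c z • g z) z₀ (Finset.mem_univ _)
      (smul_ne_zero hc₀ (hg0 z₀)) ?_ hc'
    intro z _ hzz
    by_cases hcz : c z = 0
    · left; simp [hcz]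
    · right
      rw [fdeg_smul hcz, fdeg_smul hc₀, hgd, hgd]
      have hle : (z : ℤ) ≤ (z₀ : ℤ) := hz₀max z (by simp [hT, hcz])
      exact lt_of_le_of_ne hle (fun h => hzz (Subtype.ext h))
  have := hli.fintype_card_le_finrank
  simpa using this

/-- Bounded-degree property passes to spans. -/
lemma fdeg_le_of_mem_span {s : Set (RatFunc K)} {c : ℤ}
    (hs : ∀ g ∈ s, g = 0 ∨ fdeg g ≤ c) {x : RatFunc K}
    (hx : x ∈ Submodule.span K s) : x = 0 ∨ fdeg x ≤ c := by
  induction hx using Submodule.span_induction with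
  | mem g hg => exact hs g hg
  | zero => left; rfl
  | add f g hf hg ihf ihg => exact fdeg_add_cases ihf ihg
  | smul a f hf ihf =>
    by_cases ha : a = 0
    · left; simp [ha]
    · rcases ihf with h | h
      · left; simp [h]
      · right; rw [fdeg_smul ha]; exact h

lemma fdeg_le_of_mem_mul {A B : Submodule K (RatFunc K)} {a b : ℤ}
    (hA : ∀ x ∈ A, x = 0 ∨ fdeg x ≤ a) (hB : ∀ x ∈ B, x = 0 ∨ fdeg x ≤ b)
    {x : RatFunc K} (hx : x ∈ A * B) : x = 0 ∨ fdeg x ≤ a + b := by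
  refine Submodule.mul_induction_on hx (fun m hm n hn => ?_) (fun f g ihf ihg => fdeg_add_cases ihf ihg)
  rcases hA m hm with h1 | h1
  · left; simp [h1]
  rcases hB n hn with h2 | h2
  · left; simp [h2]
  by_cases hm0 : m = 0
  · left; simp [hm0]
  by_cases hn0 : n = 0
  · left; simp [hn0]
  right; rw [fdeg_mul hm0 hn0]; exact add_le_add h1 h2


lemma fdeg_pow {f : RatFunc K} (hf : f ≠ 0) (m : ℕ) : fdeg (f ^ m) = m * fdeg f := by
  induction m with
  | zero => simpa using fdeg_one
  | succ k ih => rw [pow_succ, fdeg_mul (pow_ne_zero _ hf) hf, ih]; push_cast; ring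

lemma no_common_root {a b : K[X]} (h : IsCoprime a b) {w : K} (ha : a.eval w = 0)
    (hb : b.eval w = 0) : False := by
  obtain ⟨u, v, huv⟩ := h
  have := congrArg (Polynomial.eval w) huv
  simp [ha, hb] at this

/-- degree of the homogenized polynomial -/
lemma natDegree_mix {P Q : K[X]} (hP0 : P ≠ 0) (hQ0 : Q ≠ 0)
    (hdpq : Q.natDegree < P.natDegree) (m : ℕ) {u : K[X]} (hu0 : u ≠ 0)
    (hum : u.natDegree ≤ m) :
    (∑ i ∈ Finset.range (m+1), Polynomial.C (u.coeff i) * P^i * Q^(m-i)).natDegree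
      = u.natDegree * P.natDegree + (m - u.natDegree) * Q.natDegree := by
  classical
  set dp := P.natDegree
  set dq := Q.natDegree
  set du := u.natDegree
  set D := du * dp + (m - du) * dq with hD
  have hterm_deg : ∀ i, u.coeff i ≠ 0 →
      (Polynomial.C (u.coeff i) * P^i * Q^(m-i)).natDegree = i * dp + (m-i) * dq := by
    intro i hc
    rw [natDegree_mul (mul_ne_zero (by simpa using hc) (pow_ne_zero _ hP0)) (pow_ne_zero _ hQ0),
      natDegree_mul (by simpa using hc) (pow_ne_zero _ hP0), natDegree_C,
      natDegree_pow, natDegree_pow, zero_add]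
  have hle : ∀ i ∈ Finset.range (m+1),
      (Polynomial.C (u.coeff i) * P^i * Q^(m-i)).natDegree ≤ D := by
    intro i _
    by_cases hc : u.coeff i = 0
    · simp [hc]
    have hi : i ≤ du := le_natDegree_of_ne_zero hc
    rw [hterm_deg i hc, hD]
    have h1 : i ≤ m := le_trans hi hum
    zify [hi, hum, h1]
    nlinarith [mul_nonneg (sub_nonneg.mpr (show (i:ℤ) ≤ du by exact_mod_cast hi))
      (sub_nonneg.mpr (show (dq:ℤ) ≤ dp by exact_mod_cast le_of_lt hdpq))]
  have hmain : (Polynomial.C (u.coeff du) * P^du * Q^(m-du)).natDegree = D := by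
    rw [hterm_deg du (by simpa [du] using leadingCoeff_ne_zero.mpr hu0)]
  have hcoeff : (∑ i ∈ Finset.range (m+1), Polynomial.C (u.coeff i) * P^i * Q^(m-i)).coeff D ≠ 0 := by
    rw [finset_sum_coeff]
    rw [Finset.sum_eq_single du]
    · rw [← hmain, coeff_natDegree, leadingCoeff_mul, leadingCoeff_mul, leadingCoeff_C,
        leadingCoeff_pow, leadingCoeff_pow]
      exact mul_ne_zero (mul_ne_zero (leadingCoeff_ne_zero.mpr hu0)
        (pow_ne_zero _ (leadingCoeff_ne_zero.mpr hP0))) (pow_ne_zero _ (leadingCoeff_ne_zero.mpr hQ0))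
    · intro i _ hne
      by_cases hc : u.coeff i = 0
      · simp [hc]
      have hi : i ≤ du := le_natDegree_of_ne_zero hc
      have hilt : i < du := lt_of_le_of_ne hi hne
      apply coeff_eq_zero_of_natDegree_lt
      rw [hterm_deg i hc, hD]
      have h1 : i ≤ m := le_trans hi hum
      zify [hi, hum, h1, le_of_lt hilt]
      nlinarith [mul_pos (sub_pos.mpr (show (i:ℤ) < du by exact_mod_cast hilt))
        (sub_pos.mpr (show (dq:ℤ) < dp by exact_mod_cast hdpq))]
    · intro hdu
      exact absurd (Finset.mem_range.mpr (Nat.lt_succ_of_le hum)) hdu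
  exact le_antisymm (natDegree_sum_le_of_forall_le _ _ hle) (le_natDegree_of_ne_zero hcoeff)


section sfil

variable {n : ℕ} (e : Fin n → RatFunc K)

lemma sfil_mono {i j : ℕ} (h : i ≤ j) : sfil e i ≤ sfil e j :=
  Submodule.span_mono (Set.image_mono fun x hx => lt_of_lt_of_le hx h)

lemma mem_sfil {i : ℕ} (j : Fin n) (h : (j : ℕ) < i) : e j ∈ sfil e i :=
  Submodule.subset_span ⟨j, h, rfl⟩

instance fd_sfil (i : ℕ) : FiniteDimensional K (sfil e i) :=
  FiniteDimensional.span_of_finite K ((Set.toFinite _).image e)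

lemma sfil_sq_eq_span (i : ℕ) :
    sfil e i * sfil e i = Submodule.span K ((e '' {j | (j : ℕ) < i}) * (e '' {j | (j : ℕ) < i})) :=
  Submodule.span_mul_span K _ _

instance fd_sfil_sq (i : ℕ) : FiniteDimensional K ↥(sfil e i * sfil e i) := by
  rw [sfil_sq_eq_span]
  exact FiniteDimensional.span_of_finite K (Set.Finite.mul ((Set.toFinite _).image e) ((Set.toFinite _).image e))

lemma finrank_sfil (hli : LinearIndependent K e) {i : ℕ} (hi : i ≤ n) :
    Module.finrank K (sfil e i) = i := by
  have himg : e '' {j | (j : ℕ) < i} = Set.range (e ∘ Fin.castLE hi) := by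
    ext x
    constructor
    · rintro ⟨j, hj, rfl⟩
      exact ⟨⟨(j : ℕ), hj⟩, by simp [Function.comp, Fin.castLE]⟩
    · rintro ⟨k, rfl⟩
      exact ⟨Fin.castLE hi k, k.2, rfl⟩
  rw [sfil, himg, finrank_span_eq_card (hli.comp _ (Fin.castLE_injective hi))]
  simp

/-- elements of `sfil e i` have `fdeg ≤ c` if the generators do -/
lemma sfil_bound {i : ℕ} {c : ℤ} (hc : ∀ (j : Fin n), (j : ℕ) < i → fdeg (e j) ≤ c)
    {x : RatFunc K} (hx : x ∈ sfil e i) : x = 0 ∨ fdeg x ≤ c := by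
  refine fdeg_le_of_mem_span ?_ hx
  rintro g ⟨j, hj, rfl⟩
  exact Or.inr (hc j hj)

lemma sfil_subset_Kgen {i : ℕ} {T : Set (RatFunc K)}
    (hT : e '' {j | (j : ℕ) < i} ⊆ (Kgen T : Set (RatFunc K))) :
    ∀ x ∈ sfil e i, x ∈ Kgen T := by
  intro x hx
  induction hx using Submodule.span_induction with
  | mem g hg => exact hT hg
  | zero => exact Subfield.zero_mem _
  | add f g hf hg ihf ihg => exact Subfield.add_mem _ ihf ihg
  | smul a f hf ihf =>
    rw [RatFunc.smul_eq_C_mul]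
    exact Subfield.mul_mem _ (Subfield.subset_closure (Or.inl ⟨a, rfl⟩)) ihf

lemma sq_subset_Kgen {i : ℕ} {x : RatFunc K} (hx : x ∈ sfil e i * sfil e i) :
    x ∈ Kgen (sfil e i : Set (RatFunc K)) := by
  refine Submodule.mul_induction_on hx (fun m hm n hn => ?_) (fun f g ihf ihg => Subfield.add_mem _ ihf ihg)
  exact Subfield.mul_mem _ (Subfield.subset_closure (Or.inr hm)) (Subfield.subset_closure (Or.inr hn))

end sfil

/-- The key dimension-jump lemma: if `e i ∉ K(S_i)` then `dim S_{i+1}² ≥ dim S_i² + i + 1`. -/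
lemma jump {n : ℕ} (e : Fin n → RatFunc K) (hli : LinearIndependent K e)
    (hmono : StrictMono fun j : Fin n => fdeg (e j))
    (i : ℕ) (hin : i < n)
    (hnot : e ⟨i, hin⟩ ∉ Kgen (sfil e i : Set (RatFunc K))) :
    Module.finrank K ↥(sfil e i * sfil e i) + i + 1
      ≤ Module.finrank K ↥(sfil e (i+1) * sfil e (i+1)) := by
  classical
  set h : RatFunc K := e ⟨i, hin⟩ with hh
  have hh0 : h ≠ 0 := hli.ne_zero _
  set D : ℤ := fdeg h with hD
  set Si := sfil e i with hSi
  set A := Si * Si with hA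
  set B := Submodule.map (LinearMap.mulLeft K h) Si with hB
  -- bounds
  have hSiB : ∀ x ∈ Si, x = 0 ∨ fdeg x ≤ D - 1 := by
    intro x hx
    refine sfil_bound e (fun j hj => ?_) hx
    have : fdeg (e j) < D := hmono (show j < ⟨i, hin⟩ from hj)
    omega
  have hAB : ∀ x ∈ A, x = 0 ∨ fdeg x ≤ 2*D - 2 := by
    intro x hx
    have := fdeg_le_of_mem_mul hSiB hSiB hx
    rcases this with h1 | h1
    · exact Or.inl h1
    · right; omega
  have hBB : ∀ x ∈ B, x = 0 ∨ fdeg x ≤ 2*D - 1 := by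
    rintro x ⟨b, hb, rfl⟩
    simp only [LinearMap.mulLeft_apply]
    rcases hSiB b hb with h1 | h1
    · left; simp [h1]
    by_cases hb0 : b = 0
    · left; simp [hb0]
    · right; rw [fdeg_mul hh0 hb0]; omega
  -- A ⊓ B = ⊥
  have hABbot : A ⊓ B = ⊥ := by
    rw [Submodule.eq_bot_iff]
    rintro x ⟨hxA, b, hb, rfl⟩
    simp only [LinearMap.mulLeft_apply] at *
    by_cases hb0 : b = 0
    · simp [hb0]
    exfalso
    apply hnot
    have hx : h * b ∈ Kgen (Si : Set (RatFunc K)) := sq_subset_Kgen e hxA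
    have hbK : b ∈ Kgen (Si : Set (RatFunc K)) := Subfield.subset_closure (Or.inr hb)
    have heq : h = (h * b) * b⁻¹ := by field_simp
    rw [heq]
    exact Subfield.mul_mem _ hx (Subfield.inv_mem _ hbK)
  -- (A ⊔ B) ⊓ span {h²} = ⊥
  have hsupB : ∀ x ∈ A ⊔ B, x = 0 ∨ fdeg x ≤ 2*D - 1 := by
    intro x hx
    rcases Submodule.mem_sup.mp hx with ⟨y, hy, z, hz, rfl⟩
    have h1 : y = 0 ∨ fdeg y ≤ 2*D - 1 := by
      rcases hAB y hy with h'|h'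
      · exact Or.inl h'
      · right; omega
    have h2 := hBB z hz
    by_cases hy0 : y = 0
    · simpa [hy0] using h2
    by_cases hz0 : z = 0
    · simpa [hz0] using h1
    by_cases hyz : y + z = 0
    · exact Or.inl hyz
    · right
      exact le_trans (fdeg_add_le hz0 hyz) (max_le (h1.resolve_left hy0) (h2.resolve_left hz0))
  have hh2 : h * h ≠ 0 := mul_ne_zero hh0 hh0
  have hWbot : (A ⊔ B) ⊓ Submodule.span K {h * h} = ⊥ := by
    rw [Submodule.eq_bot_iff]
    rintro x ⟨hx1, hx2⟩
    rcases Submodule.mem_span_singleton.mp hx2 with ⟨c, rfl⟩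
    by_cases hc : c = 0
    · simp [hc]
    exfalso
    have hdeg : fdeg (c • (h * h)) = 2*D := by
      rw [fdeg_smul hc, fdeg_mul hh0 hh0]; ring
    rcases hsupB _ hx1 with h'|h'
    · exact (smul_ne_zero hc hh2) h'
    · omega
  -- dimension count
  have hBfin : FiniteDimensional K B := by rw [hB]; infer_instance
  have hfinB : Module.finrank K B = Module.finrank K Si := by
    have hinj : Function.Injective (LinearMap.mulLeft K h) := fun x y hxy => by
      simpa using mul_left_cancel₀ hh0 (by simpa using hxy)
    exact (Submodule.equivMapOfInjective _ hinj Si).finrank_eq.symm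
  have hsup1 : Module.finrank K ↥(A ⊔ B) = Module.finrank K A + Module.finrank K Si := by
    have := Submodule.finrank_sup_add_finrank_inf_eq A B
    rw [hABbot] at this
    simpa [hfinB] using this
  have hfinss : Module.finrank K ↥(Submodule.span K {h * h}) = 1 :=
    finrank_span_singleton hh2
  have hsup2 : Module.finrank K ↥(A ⊔ B ⊔ Submodule.span K {h * h})
      = Module.finrank K A + Module.finrank K Si + 1 := by
    have := Submodule.finrank_sup_add_finrank_inf_eq (A ⊔ B) (Submodule.span K {h * h})
    rw [hWbot] at this
    simpa [hsup1, hfinss] using this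
  -- W ≤ S_{i+1}²
  have hW : A ⊔ B ⊔ Submodule.span K {h * h} ≤ sfil e (i+1) * sfil e (i+1) := by
    have hle : Si ≤ sfil e (i+1) := sfil_mono e (Nat.le_succ i)
    have hmem : h ∈ sfil e (i+1) := mem_sfil e ⟨i, hin⟩ (Nat.lt_succ_self i)
    refine sup_le (sup_le ?_ ?_) ?_
    · exact mul_le_mul' hle hle
    · rintro x ⟨b, hb, rfl⟩
      exact Submodule.mul_mem_mul hmem (hle hb)
    · rw [Submodule.span_le, Set.singleton_subset_iff]
      exact Submodule.mul_mem_mul hmem hmem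
  have := Submodule.finrank_mono hW
  rw [hsup2, finrank_sfil e hli (le_of_lt hin)] at this
  omega


/-- powers of a rational function of positive degree are linearly independent,
i.e. `aeval h` is injective. -/
lemma aeval_injective_of_fdeg_pos {h : RatFunc K} (hd : 0 < fdeg h) :
    Function.Injective (Polynomial.aeval h : K[X] →ₐ[K] RatFunc K) := by
  have hh0 : h ≠ 0 := by
    rintro rfl
    simp [fdeg, RatFunc.intDegree_zero] at hd
  rw [injective_iff_map_eq_zero]
  intro p hp
  by_contra hp0
  rw [Polynomial.aeval_eq_sum_range] at hp
  refine sum_ne_zero_of_dominant (Finset.range (p.natDegree + 1))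
    (fun i => p.coeff i • h ^ i) p.natDegree (Finset.self_mem_range_succ _) ?_ ?_ hp
  · exact smul_ne_zero (leadingCoeff_ne_zero.mpr hp0) (pow_ne_zero _ hh0)
  · intro i hi hne
    by_cases hc : p.coeff i = 0
    · left; simp [hc]
    · right
      show fdeg (p.coeff i • h ^ i) < fdeg (p.coeff p.natDegree • h ^ p.natDegree)
      rw [fdeg_smul hc, fdeg_smul (show p.coeff p.natDegree ≠ 0 from leadingCoeff_ne_zero.mpr hp0),
        fdeg_pow hh0, fdeg_pow hh0]
      have : i < p.natDegree :=
        lt_of_le_of_ne (Nat.lt_succ_iff.mp (Finset.mem_range.mp hi)) hne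
      have : (i : ℤ) < p.natDegree := by exact_mod_cast this
      nlinarith

/-- The key field-theoretic input: if `X ∈ K(h)` for `h` with
`deg denom < deg num`, then `h` has degree 1. -/
lemma fdeg_eq_one_of_X_mem [IsAlgClosed K] {h : RatFunc K}
    (hd : h.denom.natDegree < h.num.natDegree)
    (hX : (RatFunc.X : RatFunc K) ∈ Kgen ({h} : Set (RatFunc K))) :
    fdeg h = 1 := by
  classical
  set P := h.num with hP
  set Q := h.denom with hQ
  have hP0 : P ≠ 0 := by
    intro h0
    rw [h0] at hd
    simp at hd
  have hQ0 : Q ≠ 0 := h.denom_ne_zero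
  have hh0 : h ≠ 0 := fun h0 => hP0 (by rw [hP, h0]; simp)
  have hfd : fdeg h = (P.natDegree : ℤ) - Q.natDegree := rfl
  have hdpos : 0 < fdeg h := by rw [hfd]; omega
  have hinj := aeval_injective_of_fdeg_pos hdpos
  have hinj' : Function.Injective ((Polynomial.aeval h : K[X] →ₐ[K] RatFunc K) : K[X] →+* RatFunc K) := hinj
  set ψ : RatFunc K →+* RatFunc K := IsFractionRing.lift hinj' with hψ
  have hψalg : ∀ p : K[X], ψ (algebraMap K[X] (RatFunc K) p) = Polynomial.aeval h p := by
    intro p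
    exact IsFractionRing.lift_algebraMap hinj' p
  -- Kgen {h} is inside the range of ψ
  have hsub : Kgen ({h} : Set (RatFunc K)) ≤ ψ.fieldRange := by
    apply Subfield.closure_le.mpr
    rintro x (⟨a, rfl⟩ | hx)
    · refine ⟨algebraMap K[X] (RatFunc K) (Polynomial.C a), ?_⟩
      rw [hψalg, Polynomial.aeval_C, ← RatFunc.algebraMap_eq_C]
    · rw [Set.mem_singleton_iff] at hx
      subst hx
      exact ⟨algebraMap K[X] (RatFunc K) Polynomial.X, by rw [hψalg, Polynomial.aeval_X]⟩
  obtain ⟨r, hr⟩ := hsub hX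
  have hr0 : r ≠ 0 := by
    rintro rfl
    rw [map_zero] at hr
    exact RatFunc.X_ne_zero hr.symm
  set a := r.num with ha
  set b := r.denom with hb
  have ha0 : a ≠ 0 := RatFunc.num_ne_zero hr0
  have hb0 : b ≠ 0 := r.denom_ne_zero
  have hab : IsCoprime a b := RatFunc.isCoprime_num_denom r
  have havb : (RatFunc.X : RatFunc K) * Polynomial.aeval h b = Polynomial.aeval h a := by
    have h1 : Polynomial.aeval h a / Polynomial.aeval h b = RatFunc.X := by
      rw [← hr]
      conv_rhs => rw [← RatFunc.num_div_denom r]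
      rw [map_div₀, hψalg, hψalg]
    have hbne : Polynomial.aeval h b ≠ 0 := fun hz =>
      hb0 (hinj (by simpa using hz))
    rw [← h1]
    field_simp
  -- homogenize
  set m := max a.natDegree b.natDegree with hm
  have halginj : Function.Injective (algebraMap K[X] (RatFunc K)) :=
    IsFractionRing.injective K[X] (RatFunc K)
  have hQA : algebraMap K[X] (RatFunc K) Q ≠ 0 := fun hz => hQ0 (halginj (by simpa using hz))
  have hbne : Polynomial.aeval h b ≠ 0 := fun hz => hb0 (hinj (by simpa using hz))
  have hmix : ∀ u : K[X], u.natDegree ≤ m →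
      algebraMap K[X] (RatFunc K)
          (∑ i ∈ Finset.range (m+1), Polynomial.C (u.coeff i) * P^i * Q^(m-i))
        = (algebraMap K[X] (RatFunc K) Q)^m * Polynomial.aeval h u := by
    intro u hu
    rw [Polynomial.aeval_eq_sum_range' (Nat.lt_succ_of_le hu), map_sum, Finset.mul_sum]
    refine Finset.sum_congr rfl fun i hi => ?_
    have him : i ≤ m := Nat.lt_succ_iff.mp (Finset.mem_range.mp hi)
    rw [map_mul, map_mul, map_pow, map_pow, RatFunc.algebraMap_C]
    rw [RatFunc.smul_eq_C_mul]
    have hPQ : h = algebraMap K[X] (RatFunc K) P / algebraMap K[X] (RatFunc K) Q :=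
      (RatFunc.num_div_denom h).symm
    rw [hPQ, div_pow,
      show (algebraMap K[X] (RatFunc K) Q)^m
          = (algebraMap K[X] (RatFunc K) Q)^(m-i) * (algebraMap K[X] (RatFunc K) Q)^i by
        rw [← pow_add, Nat.sub_add_cancel him]]
    have hQi : (algebraMap K[X] (RatFunc K) Q)^i ≠ 0 := pow_ne_zero _ hQA
    field_simp
  set Amix := ∑ i ∈ Finset.range (m+1), Polynomial.C (a.coeff i) * P^i * Q^(m-i) with hAmix
  set Bmix := ∑ i ∈ Finset.range (m+1), Polynomial.C (b.coeff i) * P^i * Q^(m-i) with hBmix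
  have hAm : algebraMap K[X] (RatFunc K) Amix
      = (algebraMap K[X] (RatFunc K) Q)^m * Polynomial.aeval h a := hmix a (le_max_left _ _)
  have hBm : algebraMap K[X] (RatFunc K) Bmix
      = (algebraMap K[X] (RatFunc K) Q)^m * Polynomial.aeval h b := hmix b (le_max_right _ _)
  have hBmix0 : Bmix ≠ 0 := by
    intro hz
    rw [hz, map_zero] at hBm
    exact mul_ne_zero (pow_ne_zero _ hQA) hbne hBm.symm
  have hpoly : Polynomial.X * Bmix = Amix := by
    apply halginj
    rw [map_mul, RatFunc.algebraMap_X, hBm, hAm, ← havb]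
    ring
  have hAmix0 : Amix ≠ 0 := by
    rw [← hpoly]
    exact mul_ne_zero Polynomial.X_ne_zero hBmix0
  -- coprimality of the homogenizations
  have hcop : IsCoprime Amix Bmix := by
    by_contra hnc
    rw [← EuclideanDomain.gcd_isUnit_iff] at hnc
    have hg0 : EuclideanDomain.gcd Amix Bmix ≠ 0 := fun hg =>
      hAmix0 ((EuclideanDomain.gcd_eq_zero_iff.mp hg).1)
    have hdeg : (EuclideanDomain.gcd Amix Bmix).degree ≠ 0 := fun hdg =>
      hnc (Polynomial.isUnit_iff_degree_eq_zero.mpr hdg)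
    obtain ⟨ξ, hξ⟩ := IsAlgClosed.exists_root _ hdeg
    have hevalA : Amix.eval ξ = 0 :=
      Polynomial.eval_eq_zero_of_dvd_of_eval_eq_zero (EuclideanDomain.gcd_dvd_left _ _) hξ
    have hevalB : Bmix.eval ξ = 0 :=
      Polynomial.eval_eq_zero_of_dvd_of_eval_eq_zero (EuclideanDomain.gcd_dvd_right _ _) hξ
    have hevmix : ∀ u : K[X],
        (∑ i ∈ Finset.range (m+1), Polynomial.C (u.coeff i) * P^i * Q^(m-i)).eval ξ
        = ∑ i ∈ Finset.range (m+1), u.coeff i * (P.eval ξ)^i * (Q.eval ξ)^(m-i) := by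
      intro u
      rw [Polynomial.eval_finset_sum]
      exact Finset.sum_congr rfl fun i _ => by simp
    by_cases hqz : Q.eval ξ = 0
    · have hpz : P.eval ξ ≠ 0 := fun hp => no_common_root (RatFunc.isCoprime_num_denom h) hp hqz
      have hkey : ∀ u : K[X],
          (∑ i ∈ Finset.range (m+1), Polynomial.C (u.coeff i) * P^i * Q^(m-i)).eval ξ
            = u.coeff m * (P.eval ξ)^m := by
        intro u
        rw [hevmix]
        rw [Finset.sum_eq_single m]
        · simp
        · intro i hi hne
          have hmi : m - i ≠ 0 := by
            have := Finset.mem_range.mp hi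
            omega
          simp [hqz, zero_pow hmi]
        · intro hmm
          exact absurd (Finset.self_mem_range_succ m) hmm
      have hA' := hkey a
      rw [hevalA] at hA'
      have hB' := hkey b
      rw [hevalB] at hB'
      have ham : a.coeff m = 0 := by
        rcases mul_eq_zero.mp hA'.symm with h'|h'
        · exact h'
        · exact absurd h' (pow_ne_zero _ hpz)
      have hbm : b.coeff m = 0 := by
        rcases mul_eq_zero.mp hB'.symm with h'|h'
        · exact h'
        · exact absurd h' (pow_ne_zero _ hpz)
      rcases max_cases a.natDegree b.natDegree with ⟨hmx, _⟩|⟨hmx, _⟩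
      · exact (leadingCoeff_ne_zero.mpr ha0) (by rw [Polynomial.leadingCoeff, ← hmx, ← hm]; exact ham)
      · exact (leadingCoeff_ne_zero.mpr hb0) (by rw [Polynomial.leadingCoeff, ← hmx, ← hm]; exact hbm)
    · set w := P.eval ξ / Q.eval ξ with hw
      have hkey : ∀ u : K[X], u.natDegree ≤ m →
          (∑ i ∈ Finset.range (m+1), Polynomial.C (u.coeff i) * P^i * Q^(m-i)).eval ξ
            = (Q.eval ξ)^m * u.eval w := by
        intro u hu
        rw [hevmix, Polynomial.eval_eq_sum_range' (Nat.lt_succ_of_le hu), Finset.mul_sum]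
        refine Finset.sum_congr rfl fun i hi => ?_
        have him : i ≤ m := Nat.lt_succ_iff.mp (Finset.mem_range.mp hi)
        rw [hw, div_pow,
          show (Q.eval ξ)^m = (Q.eval ξ)^(m-i) * (Q.eval ξ)^i by
            rw [← pow_add, Nat.sub_add_cancel him]]
        have hQi : (Q.eval ξ)^i ≠ 0 := pow_ne_zero _ hqz
        field_simp
      have haw : a.eval w = 0 := by
        have h' := hkey a (le_max_left _ _)
        rw [hevalA] at h'
        rcases mul_eq_zero.mp h'.symm with h''|h''
        · exact absurd h'' (pow_ne_zero _ hqz)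
        · exact h''
      have hbw : b.eval w = 0 := by
        have h' := hkey b (le_max_right _ _)
        rw [hevalB] at h'
        rcases mul_eq_zero.mp h'.symm with h''|h''
        · exact absurd h'' (pow_ne_zero _ hqz)
        · exact h''
      exact no_common_root hab haw hbw
  -- `Bmix` is a unit, so everything collapses
  have hBunit : IsUnit Bmix :=
    hcop.isUnit_of_dvd' ⟨Polynomial.X, by rw [← hpoly]; ring⟩ dvd_rfl
  have hBdeg : Bmix.natDegree = 0 := natDegree_eq_zero_of_isUnit hBunit
  have hAdeg : Amix.natDegree = 1 := by
    rw [← hpoly, Polynomial.natDegree_mul Polynomial.X_ne_zero hBmix0, natDegree_X, hBdeg]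
  have hBmixdeg := natDegree_mix hP0 hQ0 hd m hb0 (le_max_right a.natDegree b.natDegree)
  have hAmixdeg := natDegree_mix hP0 hQ0 hd m ha0 (le_max_left a.natDegree b.natDegree)
  rw [← hBmix, hBdeg] at hBmixdeg
  rw [← hAmix, hAdeg] at hAmixdeg
  -- arithmetic
  have hdp1 : 0 < P.natDegree := lt_of_le_of_lt (Nat.zero_le _) hd
  have hdb0 : b.natDegree = 0 := by
    have h1 : b.natDegree * P.natDegree = 0 := by omega
    rcases Nat.mul_eq_zero.mp h1 with h'|h'
    · exact h'
    · omega
  have hmda : m = a.natDegree := by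
    rw [hm, hdb0]
    exact Nat.max_eq_left (Nat.zero_le _)
  rw [← hmda, Nat.sub_self, zero_mul, add_zero] at hAmixdeg
  have h2 : m * P.natDegree = 1 := hAmixdeg.symm
  have hm1 : 0 < m := by
    rcases Nat.eq_zero_or_pos m with h'|h'
    · rw [h'] at h2; omega
    · exact h'
  have hdp : P.natDegree = 1 := by
    have h3 : P.natDegree ≤ m * P.natDegree := Nat.le_mul_of_pos_left _ hm1
    omega
  have hdq : Q.natDegree = 0 := by omega
  rw [hfd, hdp, hdq]
  norm_num



lemma span_subset_Kgen {s T : Set (RatFunc K)}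
    (h : s ⊆ (Kgen T : Set (RatFunc K))) :
    ∀ x ∈ Submodule.span K s, x ∈ Kgen T := by
  intro x hx
  induction hx using Submodule.span_induction with
  | mem g hg => exact h hg
  | zero => exact Subfield.zero_mem _
  | add f g hf hg ihf ihg => exact Subfield.add_mem _ ihf ihg
  | smul a f hf ihf =>
    rw [RatFunc.smul_eq_C_mul]
    exact Subfield.mul_mem _ (Subfield.subset_closure (Or.inl ⟨a, rfl⟩)) ihf

lemma low_degrees_realized {n : ℕ} (e : Fin n → RatFunc K)
    (he0 : ∀ j : Fin n, e j ≠ 0)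
    (B i : ℕ) (hB : B + 1 < i) (hin : i ≤ n)
    (hdeg : ∀ m (hm : m < n), m ≤ B → fdeg (e ⟨m, hm⟩) = m)
    {x : ℕ} (hx : x ≤ 2*B) :
    ∃ f, f ∈ sfil e i * sfil e i ∧ f ≠ 0 ∧ fdeg f = (x : ℤ) := by
  set a := min x B with ha
  set b := x - a with hb
  have haB : a ≤ B := min_le_right _ _
  have hax : a ≤ x := min_le_left _ _
  have hbB : b ≤ B := by
    rcases le_total x B with h|h
    · have : a = x := min_eq_left h
      omega
    · have : a = B := min_eq_right h
      omega
  have hab : a + b = x := by omega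
  have han : a < n := by omega
  have hbn : b < n := by omega
  refine ⟨e ⟨a, han⟩ * e ⟨b, hbn⟩,
    Submodule.mul_mem_mul (mem_sfil e _ (by simp only []; omega))
      (mem_sfil e _ (by simp only []; omega)),
    mul_ne_zero (he0 _) (he0 _), ?_⟩
  rw [fdeg_mul (he0 _) (he0 _), hdeg a han haB, hdeg b hbn hbB]
  omega

/-- Case `{γ_i} = {0, γ}`, `t ≥ γ + 3`: then `deg e_i = i - 1` for
`1 ≤ i ≤ t - 1` (here Fin-indexed: `deg (e j) = j` for `j + 1 < t`), and
`Δ := deg e_t - (t - 2)` satisfies `1 ≤ Δ ≤ γ + 1`. -/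

theorem statement11 (n : ℕ) (S : Submodule K (RatFunc K))
    (hdim : Module.finrank K ↥S = n)
    (hgen : Kgen (S : Set (RatFunc K)) = ⊤)
    (hg2 : 2 ≤ cgenus S) (hgn : cgenus S ≤ (n : ℤ) - 3)
    (e : Fin n → RatFunc K)
    (hbasis : IsFilteredBasis vInf S e)
    (he1 : ∀ j : Fin n, (j : ℕ) = 0 → e j = 1)
    (hrange : {z : ℤ | ∃ i : ℕ, 1 ≤ i ∧ i ≤ n ∧ z = cgenus (sfil e i)} = {0, cgenus S})
    (t : ℕ)
    (ht : IsLeast {i : ℕ | 1 ≤ i ∧ i ≤ n ∧ cgenus (sfil e i) = cgenus S} t)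
    (htg : cgenus S + 3 ≤ (t : ℤ)) :
    (∀ j : Fin n, (j : ℕ) + 1 < t → fdeg (e j) = (j : ℕ)) ∧
    ∀ j : Fin n, (j : ℕ) + 1 = t →
      1 ≤ fdeg (e j) - ((t : ℤ) - 2) ∧ fdeg (e j) - ((t : ℤ) - 2) ≤ cgenus S + 1 := by
  classical
  obtain ⟨hli, hspan, hanti⟩ := hbasis
  obtain ⟨⟨ht1, htn, htγ⟩, htleast⟩ := ht
  set γ : ℤ := cgenus S with hγdef
  have he0 : ∀ j : Fin n, e j ≠ 0 := fun j => hli.ne_zero j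
  have hmono : StrictMono fun j : Fin n => fdeg (e j) := by
    intro i j hij
    have h' := hanti hij
    simp only [vInf] at h'
    show fdeg (e i) < fdeg (e j)
    show (e i).intDegree < (e j).intDegree
    omega
  have ht5 : 5 ≤ t := by omega
  set g : ℕ := γ.toNat with hgdef
  have hgγ : (g : ℤ) = γ := Int.toNat_of_nonneg (by omega)
  have htg' : g + 3 ≤ t := by omega
  have hγmem : ∀ i : ℕ, 1 ≤ i → i ≤ n → cgenus (sfil e i) = 0 ∨ cgenus (sfil e i) = γ := by
    intro i h1 h2
    have hz : cgenus (sfil e i) ∈ ({0, γ} : Set ℤ) := by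
      rw [← hrange]; exact ⟨i, h1, h2, rfl⟩
    simpa using hz
  have hγzero : ∀ i : ℕ, 1 ≤ i → i < t → cgenus (sfil e i) = 0 := by
    intro i h1 h2
    rcases hγmem i h1 (by omega) with h|h
    · exact h
    · exact absurd (htleast ⟨h1, by omega, h⟩) (by omega)
  have hfr2 : ∀ i : ℕ, 1 ≤ i → i ≤ n →
      (Module.finrank K ↥(sfil e i * sfil e i) : ℤ) = cgenus (sfil e i) + 2*i - 1 := by
    intro i h1 h2
    have hc : cgenus (sfil e i)
        = (Module.finrank K ↥(sfil e i * sfil e i) : ℤ)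
          - 2*(Module.finrank K (sfil e i) : ℤ) + 1 := rfl
    rw [hc, finrank_sfil e hli h2]
    push_cast
    ring
  -- every later basis element lies in the field generated by the previous ones
  have hchain : ∀ j : ℕ, 2 ≤ j → ∀ (hjn : j < n),
      e ⟨j, hjn⟩ ∈ Kgen ((sfil e j : Set (RatFunc K))) := by
    intro j hj2 hjn
    by_contra hnot
    have hjump := jump e hli hmono j hjn hnot
    have hfr2j := hfr2 j (by omega) (by omega)
    have hfr2j1 := hfr2 (j+1) (by omega) (by omega)
    have hγj := hγmem j (by omega) (by omega)
    have hγj1 := hγmem (j+1) (by omega) (by omega)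
    have hstep : cgenus (sfil e j) + (j:ℤ) - 1 ≤ cgenus (sfil e (j+1)) := by
      have hj' : (Module.finrank K ↥(sfil e j * sfil e j) : ℤ) + j + 1
          ≤ (Module.finrank K ↥(sfil e (j+1) * sfil e (j+1)) : ℤ) := by exact_mod_cast hjump
      push_cast at hfr2j1
      omega
    have hj1γ : cgenus (sfil e (j+1)) = γ := by
      rcases hγj1 with h|h
      · exfalso; rcases hγj with h'|h' <;> omega
      · exact h
    have htle : t ≤ j + 1 := htleast ⟨by omega, by omega, hj1γ⟩
    rcases hγj with h'|h' <;> omega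
  -- hence everything lies in K(S_2) = K(e_1)
  have hKK : ∀ m : ℕ, ∀ (hm : m < n), e ⟨m, hm⟩ ∈ Kgen ((sfil e 2 : Set (RatFunc K))) := by
    intro m
    induction m using Nat.strong_induction_on with
    | _ m IH =>
      intro hm
      rcases Nat.lt_or_ge m 2 with h2|h2
      · interval_cases m
        · rw [he1 ⟨0, hm⟩ rfl]; exact Subfield.one_mem _
        · exact Subfield.subset_closure (Or.inr (mem_sfil e ⟨1, hm⟩ (by norm_num)))
      · have hmem := hchain m h2 hm
        have hgens : e '' {jj : Fin n | (jj:ℕ) < m}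
            ⊆ (Kgen ((sfil e 2 : Set (RatFunc K))) : Set (RatFunc K)) := by
          rintro x ⟨jj, hjj, rfl⟩
          have hIH := IH (jj : ℕ) hjj jj.2
          simpa using hIH
        have hle : Kgen ((sfil e m : Set (RatFunc K)))
            ≤ Kgen ((sfil e 2 : Set (RatFunc K))) := by
          apply Subfield.closure_le.mpr
          rintro x (hx | hx)
          · exact Subfield.subset_closure (Or.inl hx)
          · exact sfil_subset_Kgen e hgens x hx
        exact hle hmem
  have h1n : 1 < n := by omega
  -- X ∈ K(e_2)
  have hXmem : (RatFunc.X : RatFunc K) ∈ Kgen ({e ⟨1, h1n⟩} : Set (RatFunc K)) := by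
    have hS_KK : (S : Set (RatFunc K)) ⊆ (Kgen ((sfil e 2 : Set (RatFunc K))) : Set (RatFunc K)) := by
      intro x hx
      rw [← hspan] at hx
      refine span_subset_Kgen ?_ x hx
      rintro y ⟨j, rfl⟩
      have := hKK j.val j.2
      simpa using this
    have htop : (⊤ : Subfield (RatFunc K)) ≤ Kgen ((sfil e 2 : Set (RatFunc K))) := by
      rw [← hgen]
      apply Subfield.closure_le.mpr
      rintro x (hx|hx)
      · exact Subfield.subset_closure (Or.inl hx)
      · exact hS_KK hx
    have h2le : Kgen ((sfil e 2 : Set (RatFunc K)))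
        ≤ Kgen ({e ⟨1, h1n⟩} : Set (RatFunc K)) := by
      apply Subfield.closure_le.mpr
      rintro x (hx|hx)
      · exact Subfield.subset_closure (Or.inl hx)
      · refine span_subset_Kgen ?_ x hx
        rintro y ⟨j, hj, rfl⟩
        have hj2 : (j:ℕ) < 2 := hj
        rcases Nat.lt_or_ge (j : ℕ) 1 with hj1|hj1
        · rw [he1 j (by omega)]
          exact Subfield.one_mem _
        · have hj1' : j = ⟨1, h1n⟩ := by
            apply Fin.ext
            show (j:ℕ) = 1
            omega
          rw [hj1']
          exact Subfield.subset_closure (Or.inr rfl)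
    exact h2le (htop (Subfield.mem_top _))
  -- fdeg e_2 = 1
  have hd1pos : 0 < fdeg (e ⟨1, h1n⟩) := by
    have h0 : fdeg (e ⟨0, by omega⟩) < fdeg (e ⟨1, h1n⟩) :=
      hmono (show (⟨0, by omega⟩ : Fin n) < ⟨1, h1n⟩ from by simp [Fin.lt_def])
    rw [he1 ⟨0, by omega⟩ rfl, fdeg_one] at h0
    omega
  have hd2 : fdeg (e ⟨1, h1n⟩) = 1 := by
    apply fdeg_eq_one_of_X_mem _ hXmem
    have hint : fdeg (e ⟨1, h1n⟩)
        = ((e ⟨1, h1n⟩).num.natDegree : ℤ) - (e ⟨1, h1n⟩).denom.natDegree := rfl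
    omega
  -- the arithmetic-progression part
  have hAP : ∀ m : ℕ, m + 2 ≤ t → ∀ (hm : m < n), fdeg (e ⟨m, hm⟩) = m := by
    intro m
    induction m using Nat.strong_induction_on with
    | _ m IH =>
      intro hmt hm
      rcases Nat.lt_or_ge m 2 with h2|h2
      · interval_cases m
        · rw [he1 ⟨0, hm⟩ rfl, fdeg_one]; simp
        · rw [hd2]; simp
      · have hk1t : m + 1 < t := by omega
        have hk1n : m + 1 ≤ n := by omega
        have hγ0 : cgenus (sfil e (m+1)) = 0 := hγzero (m+1) (by omega) hk1t
        have hdimV : (Module.finrank K ↥(sfil e (m+1) * sfil e (m+1)) : ℤ) = 2*(m:ℤ) + 1 := by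
          rw [hfr2 (m+1) (by omega) hk1n, hγ0]
          push_cast
          ring
        set D := fdeg (e ⟨m, hm⟩) with hD
        have hDlow : (m : ℤ) ≤ D := by
          have hlt : fdeg (e ⟨m-1, by omega⟩) < D :=
            hmono (show (⟨m-1, by omega⟩ : Fin n) < ⟨m, hm⟩ from by
              simp only [Fin.lt_def]; omega)
          rw [IH (m-1) (by omega) (by omega) (by omega)] at hlt
          omega
        by_contra hne
        have hDhigh : (m:ℤ) + 1 ≤ D := by
          rcases lt_or_eq_of_le hDlow with h'|h'
          · omega
          · exact absurd h'.symm (by exact_mod_cast hne)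
        have hmem_m : e ⟨m, hm⟩ ∈ sfil e (m+1) := mem_sfil e _ (Nat.lt_succ_self m)
        set Z : Finset ℤ := insert (2*D) (insert (D + (m:ℤ) - 1) (insert (D + (m:ℤ) - 2)
          ((Finset.range (2*m-1)).image (fun x : ℕ => (x:ℤ))))) with hZ
        have hcast_inj : Function.Injective (fun x : ℕ => (x:ℤ)) := fun x y h => by
          have h' : (x:ℤ) = (y:ℤ) := h
          omega
        have hni4 : (D + (m:ℤ) - 2) ∉ (Finset.range (2*m-1)).image (fun x : ℕ => (x:ℤ)) := by
          simp only [Finset.mem_image, Finset.mem_range]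
          rintro ⟨x, hx, hxe⟩
          omega
        have hni3 : (D + (m:ℤ) - 1) ∉ insert (D + (m:ℤ) - 2)
            ((Finset.range (2*m-1)).image (fun x : ℕ => (x:ℤ))) := by
          simp only [Finset.mem_insert, Finset.mem_image, Finset.mem_range]
          rintro (h|⟨x, hx, hxe⟩) <;> omega
        have hni2 : (2*D) ∉ insert (D + (m:ℤ) - 1) (insert (D + (m:ℤ) - 2)
            ((Finset.range (2*m-1)).image (fun x : ℕ => (x:ℤ)))) := by
          simp only [Finset.mem_insert, Finset.mem_image, Finset.mem_range]
          rintro (h|h|⟨x, hx, hxe⟩) <;> omega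
        have hcard : Z.card = 2*m + 2 := by
          rw [hZ, Finset.card_insert_of_notMem hni2, Finset.card_insert_of_notMem hni3,
            Finset.card_insert_of_notMem hni4, Finset.card_image_of_injective _ hcast_inj,
            Finset.card_range]
          omega
        have hreal : ∀ z ∈ Z, ∃ f, f ∈ sfil e (m+1) * sfil e (m+1) ∧ f ≠ 0 ∧ fdeg f = z := by
          intro z hz
          simp only [hZ, Finset.mem_insert, Finset.mem_image, Finset.mem_range] at hz
          rcases hz with rfl | rfl | rfl | ⟨x, hx, rfl⟩
          · refine ⟨_, Submodule.mul_mem_mul hmem_m hmem_m,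
              mul_ne_zero (he0 _) (he0 _), ?_⟩
            rw [fdeg_mul (he0 _) (he0 _)]
            ring
          · refine ⟨_, Submodule.mul_mem_mul hmem_m
              (mem_sfil e ⟨m-1, by omega⟩ (by simp only []; omega)),
              mul_ne_zero (he0 _) (he0 _), ?_⟩
            rw [fdeg_mul (he0 _) (he0 _), IH (m-1) (by omega) (by omega) (by omega)]
            omega
          · refine ⟨_, Submodule.mul_mem_mul hmem_m
              (mem_sfil e ⟨m-2, by omega⟩ (by simp only []; omega)),
              mul_ne_zero (he0 _) (he0 _), ?_⟩
            rw [fdeg_mul (he0 _) (he0 _), IH (m-2) (by omega) (by omega) (by omega)]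
            omega
          · exact low_degrees_realized e he0 (m-1) (m+1) (by omega) hk1n
              (fun m' hm' hle => IH m' (by omega) (by omega) hm') (by omega)
        have hcardle := card_le_finrank _ Z hreal
        rw [hcard] at hcardle
        have hcast : ((2*m + 2 : ℕ) : ℤ)
            ≤ (Module.finrank K ↥(sfil e (m+1) * sfil e (m+1)) : ℤ) := by exact_mod_cast hcardle
        omega
  constructor
  · intro j hj
    have := hAP j.val (by omega) j.2
    simpa using this
  · intro j hj
    set D := fdeg (e j) with hD
    have hjt : (j : ℕ) = t - 1 := by omega
    have hDlow : (t:ℤ) - 2 < D := by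
      have hlt : fdeg (e ⟨t-2, by omega⟩) < D := by
        rw [hD]
        exact hmono (show (⟨t-2, by omega⟩ : Fin n) < j from by
          simp only [Fin.lt_def]; omega)
      rw [hAP (t-2) (by omega) (by omega)] at hlt
      omega
    constructor
    · omega
    · by_contra hcon
      push_neg at hcon
      have hDhigh : (t:ℤ) + g ≤ D := by omega
      have hmem_t : e j ∈ sfil e t := mem_sfil e j (by omega)
      have hdimV : (Module.finrank K ↥(sfil e t * sfil e t) : ℤ) = γ + 2*(t:ℤ) - 1 := by
        rw [hfr2 t (by omega) htn, htγ]
      set Z : Finset ℤ := insert (2*D)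
        (((Finset.range (g+2)).image (fun r : ℕ => D + (t:ℤ) - 2 - r))
          ∪ ((Finset.range (2*t-3)).image (fun x : ℕ => (x:ℤ)))) with hZ
      have hcast_inj : Function.Injective (fun x : ℕ => (x:ℤ)) := fun x y h => by
        have h' : (x:ℤ) = (y:ℤ) := h
        omega
      have hsub_inj : Function.Injective (fun r : ℕ => D + (t:ℤ) - 2 - r) := fun x y h => by
        have h' : D + (t:ℤ) - 2 - x = D + (t:ℤ) - 2 - y := h
        omega
      have hdisj : Disjoint ((Finset.range (g+2)).image (fun r : ℕ => D + (t:ℤ) - 2 - r))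
          ((Finset.range (2*t-3)).image (fun x : ℕ => (x:ℤ))) := by
        rw [Finset.disjoint_left]
        intro z hz1 hz2
        simp only [Finset.mem_image, Finset.mem_range] at hz1 hz2
        obtain ⟨r, hr, rfl⟩ := hz1
        obtain ⟨x, hx, hxe⟩ := hz2
        omega
      have hni2 : (2*D) ∉ (((Finset.range (g+2)).image (fun r : ℕ => D + (t:ℤ) - 2 - r))
          ∪ ((Finset.range (2*t-3)).image (fun x : ℕ => (x:ℤ)))) := by
        simp only [Finset.mem_union, Finset.mem_image, Finset.mem_range]
        rintro (⟨r, hr, hre⟩|⟨x, hx, hxe⟩) <;> omega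
      have hcard : Z.card = 2*t + g := by
        rw [hZ, Finset.card_insert_of_notMem hni2, Finset.card_union_of_disjoint hdisj,
          Finset.card_image_of_injective _ hsub_inj, Finset.card_image_of_injective _ hcast_inj,
          Finset.card_range, Finset.card_range]
        omega
      have hreal : ∀ z ∈ Z, ∃ f, f ∈ sfil e t * sfil e t ∧ f ≠ 0 ∧ fdeg f = z := by
        intro z hz
        simp only [hZ, Finset.mem_insert, Finset.mem_union, Finset.mem_image,
          Finset.mem_range] at hz
        rcases hz with rfl | ⟨r, hr, rfl⟩ | ⟨x, hx, rfl⟩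
        · refine ⟨_, Submodule.mul_mem_mul hmem_t hmem_t,
            mul_ne_zero (he0 _) (he0 _), ?_⟩
          rw [fdeg_mul (he0 _) (he0 _), ← hD]
          ring
        · refine ⟨_, Submodule.mul_mem_mul hmem_t
            (mem_sfil e ⟨t-2-r, by omega⟩ (by simp only []; omega)),
            mul_ne_zero (he0 _) (he0 _), ?_⟩
          rw [fdeg_mul (he0 _) (he0 _), hAP (t-2-r) (by omega) (by omega), ← hD]
          omega
        · exact low_degrees_realized e he0 (t-2) t (by omega) htn
            (fun m' hm' hle => hAP m' (by omega) hm') (by omega)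
      have hcardle := card_le_finrank _ Z hreal
      rw [hcard] at hcardle
      have hcast : ((2*t + g : ℕ) : ℤ)
          ≤ (Module.finrank K ↥(sfil e t * sfil e t) : ℤ) := by exact_mod_cast hcardle
      omega


end FFF
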